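/- arXiv:2409.01361 — 2 statements merged into one kernel-verified Lean document; each statement's English description precedes it below -/
import Mathlib

section
/- Suppose for every z in a Borel set X ⊆ ℂ there exist a constant B ≥ 1 and a sequence of radii r_j(z) → 0 with B^{-1} r_j^δ ≤ μ(B(z, r_j)) ≤ B r_j^δ, where δ ≥ 2. If additionally the 2-dimensional Lebesgue measure of ∪_{z∈X} B(z, r(z)) can be made arbitrarily small for suitable choices r(z) ∈ {r_j(z)}, then μ(X) = 0. -/
open MeasureTheory Metric Set ENNReal

/-- If `δ ≥ 2` and every point of `X` carries balls whose `μ`-measure is comparable to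
`r^δ`, and these balls can be chosen with arbitrarily small total Lebesgue area, then
`μ(X) = 0`. -/
theorem measure_zero_of_ball_comparable (μ : Measure ℂ) [IsProbabilityMeasure μ]
    (X : Set ℂ) (hX : MeasurableSet X) (δ B : ℝ) (hδ : 2 ≤ δ) (hB : 1 ≤ B)
    (h : ∀ γ : ℝ, 0 < γ → ∃ r : ℂ → ℝ,
      (∀ z ∈ X, 0 < r z ∧ r z ≤ 1 ∧
        ENNReal.ofReal (r z ^ δ / B) ≤ μ (Metric.ball z (r z)) ∧
        μ (Metric.ball z (r z)) ≤ ENNReal.ofReal (B * r z ^ δ)) ∧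
      volume (⋃ z ∈ X, Metric.ball z (r z)) < ENNReal.ofReal γ) :
    μ X = 0 := by
  obtain ⟨N, τ, hτ, hN⟩ := HasBesicovitchCovering.no_satelliteConfig (α := ℂ)
  set C : ℝ≥0∞ := ENNReal.ofReal (4 * B / Real.pi) with hC
  have hBpos : (0:ℝ) < B := lt_of_lt_of_le one_pos hB
  have key : ∀ γ : ℝ, 0 < γ → μ X ≤ (N : ℝ≥0∞) / (N + 1) * μ X + C * ENNReal.ofReal γ := by
    intro γ hγ
    obtain ⟨r, hr, hvol⟩ := h γ hγ
    obtain ⟨t, htX, hlarge, hdisj⟩ := Besicovitch.exist_finset_disjoint_balls_large_measure μ hτ hN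
      X (fun z => r z / 2) (fun z hz => by linarith [(hr z hz).1])
      (fun z hz => by linarith [(hr z hz).2.1])
    -- bound μ of each closed ball by C * volume of the half open ball
    have hball : ∀ z ∈ X, μ (closedBall z (r z / 2)) ≤ C * volume (ball z (r z / 2)) := by
      intro z hz
      obtain ⟨h1, h2, _, h4⟩ := hr z hz
      have hsub : closedBall z (r z / 2) ⊆ ball z (r z) :=
        closedBall_subset_ball (by linarith)
      have hrδ : r z ^ δ ≤ r z ^ 2 := by
        have := Real.rpow_le_rpow_of_exponent_ge h1 h2 hδ
        simpa [Real.rpow_two] using this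
      calc μ (closedBall z (r z / 2)) ≤ μ (ball z (r z)) := measure_mono hsub
        _ ≤ ENNReal.ofReal (B * r z ^ δ) := h4
        _ ≤ ENNReal.ofReal (B * r z ^ 2) := by
            apply ENNReal.ofReal_le_ofReal; nlinarith
        _ = C * volume (ball z (r z / 2)) := by
            rw [Complex.volume_ball, hC, ← ENNReal.ofReal_pow (by positivity),
              ← ENNReal.ofReal_coe_nnreal, NNReal.coe_real_pi, ← ENNReal.ofReal_mul (by positivity),
              ← ENNReal.ofReal_mul (by positivity)]
            congr 1
            have hπ : Real.pi ≠ 0 := Real.pi_ne_zero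
            field_simp
            ring
    -- sum over the finset
    have hsum : μ (⋃ z ∈ t, closedBall z (r z / 2)) ≤ C * ENNReal.ofReal γ := by
      calc μ (⋃ z ∈ t, closedBall z (r z / 2))
          ≤ ∑ z ∈ t, μ (closedBall z (r z / 2)) := measure_biUnion_finset_le t _
        _ ≤ ∑ z ∈ t, C * volume (ball z (r z / 2)) := by
            exact Finset.sum_le_sum fun z hz => hball z (htX hz)
        _ = C * ∑ z ∈ t, volume (ball z (r z / 2)) := by rw [Finset.mul_sum]
        _ = C * volume (⋃ z ∈ t, ball z (r z / 2)) := by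
            rw [measure_biUnion_finset (hdisj.mono fun z => ball_subset_closedBall)
              (fun z _ => measurableSet_ball)]
        _ ≤ C * volume (⋃ z ∈ X, ball z (r z)) := by
            have hsub2 : (⋃ z ∈ t, ball z (r z / 2)) ⊆ ⋃ z ∈ X, ball z (r z) := by
              refine iUnion₂_subset fun z hz => subset_iUnion₂_of_subset z (htX hz) ?_
              exact ball_subset_ball (by linarith [(hr z (htX hz)).1])
            exact mul_le_mul_right (measure_mono hsub2) C
        _ ≤ C * ENNReal.ofReal γ := mul_le_mul_right hvol.le C
    calc μ X ≤ μ (X \ ⋃ z ∈ t, closedBall z (r z / 2)) + μ (⋃ z ∈ t, closedBall z (r z / 2)) := by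
          exact (measure_mono (subset_diff_union X _)).trans (measure_union_le _ _)
      _ ≤ (N : ℝ≥0∞) / (N + 1) * μ X + C * ENNReal.ofReal γ := add_le_add hlarge hsum
  -- pass to the limit γ → 0
  have hle : μ X ≤ (N : ℝ≥0∞) / (N + 1) * μ X := by
    refine ENNReal.le_of_forall_pos_le_add fun ε hε _ => ?_
    have hγpos : (0:ℝ) < ε / (4 * B / Real.pi + 1) := by positivity
    refine (key _ hγpos).trans (add_le_add_right ?_ _)
    rw [hC, ← ENNReal.ofReal_mul (by positivity)]
    refine le_trans (ENNReal.ofReal_le_ofReal ?_) (le_of_eq ENNReal.ofReal_coe_nnreal)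
    have h2 : (0:ℝ) < 4 * B / Real.pi + 1 := by positivity
    rw [mul_comm, div_mul_eq_mul_div, div_le_iff₀ h2]
    nlinarith [ε.coe_nonneg]
  by_contra hne
  have hfin : μ X ≠ ⊤ := (measure_lt_top μ X).ne
  have hlt : (N : ℝ≥0∞) / (N + 1) * μ X < 1 * μ X := by
    rw [ENNReal.mul_lt_mul_iff_left hne hfin, ENNReal.div_lt_iff (by simp) (by simp), one_mul]
    exact ENNReal.lt_add_right (by simp) one_ne_zero
  rw [one_mul] at hlt
  exact absurd hle (not_le.mpr hlt)
end

section
/- Suppose μ₁ and μ₂ are δ-conformal measures satisfying μ_k(f(A)) = ∫_A |Df|^δ dμ_k for every small ball A around a point z and branch f, and that μ₁ = φ·μ₂ with Radon–Nikodym derivative φ. Then φ∘f = φ μ₂-almost everywhere on the set where |Df| ≠ 0. -/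
open MeasureTheory

/-- Invariance of the Radon–Nikodym derivative under a conformal branch: if
`μ₁ = φ·μ₂` and both measures satisfy `μ_k(f(B)) = ∫_B |Df|^δ dμ_k` for all Borel
`B ⊆ U`, with `Df ≠ 0` on `U`, then `φ ∘ f = φ` `μ₂`-a.e. on `U`. -/
theorem radon_nikodym_invariance (U : Set ℂ) (hU : IsOpen U) (f : ℂ → ℂ)
    (hf : DifferentiableOn ℂ f U) (hinj : Set.InjOn f U)
    (hDf : ∀ z ∈ U, deriv f z ≠ 0) (δ : ℝ) (hδ : 0 < δ)
    (μ₁ μ₂ : Measure ℂ) [IsFiniteMeasure μ₁] [IsFiniteMeasure μ₂]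
    (φ : ℂ → ENNReal) (hφ : Measurable φ) (hRN : μ₁ = μ₂.withDensity φ)
    (hconf₁ : ∀ B : Set ℂ, MeasurableSet B → B ⊆ U →
      μ₁ (f '' B) = ∫⁻ z in B, ENNReal.ofReal (‖deriv f z‖ ^ δ) ∂μ₁)
    (hconf₂ : ∀ B : Set ℂ, MeasurableSet B → B ⊆ U →
      μ₂ (f '' B) = ∫⁻ z in B, ENNReal.ofReal (‖deriv f z‖ ^ δ) ∂μ₂) :
    ∀ᵐ z ∂(μ₂.restrict U), φ (f z) = φ z := by
  set g : ℂ → ENNReal := fun z => ENNReal.ofReal (‖deriv f z‖ ^ δ) with hg_def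
  have hUm : MeasurableSet U := hU.measurableSet
  have hg : Measurable g := by
    have hgeq : g = fun z => ENNReal.ofReal (‖deriv f z‖ ^ δ) := by
      funext z; rw [hg_def]
    rw [hgeq]
    exact ((measurable_deriv f).norm.pow measurable_const).ennreal_ofReal
  -- the measurable embeddings
  have he : MeasurableEmbedding (U.restrict f) :=
    ContinuousOn.measurableEmbedding hUm hf.continuousOn hinj
  have hv : MeasurableEmbedding ((↑) : U → ℂ) := MeasurableEmbedding.subtype_coe hUm
  set e : U → ℂ := U.restrict f with he_def
  set ν : Measure U := μ₂.comap e with hν_def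
  set κ : Measure U := μ₂.comap ((↑) : U → ℂ) with hκ_def
  have hmapκ : κ.map ((↑) : U → ℂ) = μ₂.restrict U := by
    rw [hκ_def, hv.map_comap, Subtype.range_coe]
  -- ν = κ.withDensity (g ∘ val)
  have hνd : ν = κ.withDensity (fun x => g (x : ℂ)) := by
    ext A hA
    have himA : MeasurableSet (((↑) : U → ℂ) '' A) := hv.measurableSet_image' hA
    have hsubA : ((↑) : U → ℂ) '' A ⊆ U := Subtype.coe_image_subset U A
    have h1 : ν A = μ₂ (f '' (((↑) : U → ℂ) '' A)) := by
      rw [hν_def, he.comap_apply]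
      congr 1
      simp [he_def, Set.image_image, Set.restrict]
      rfl
    rw [h1, hconf₂ _ himA hsubA, withDensity_apply _ hA]
    have h2 : (μ₂.restrict U).restrict (((↑) : U → ℂ) '' A)
        = μ₂.restrict (((↑) : U → ℂ) '' A) := by
      rw [Measure.restrict_restrict himA, Set.inter_eq_self_of_subset_left hsubA]
    calc ∫⁻ z in ((↑) : U → ℂ) '' A, g z ∂μ₂
        = ∫⁻ z in ((↑) : U → ℂ) '' A, g z ∂(μ₂.restrict U) := by rw [h2]
      _ = ∫⁻ z in ((↑) : U → ℂ) '' A, g z ∂(κ.map ((↑) : U → ℂ)) := by rw [hmapκ]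
      _ = ∫⁻ x in ((↑) : U → ℂ) ⁻¹' (((↑) : U → ℂ) '' A), g (x : ℂ) ∂κ := by
          rw [hv.restrict_map, hv.lintegral_map]
      _ = ∫⁻ x in A, g (x : ℂ) ∂κ := by
          rw [Set.preimage_image_eq A Subtype.coe_injective]
  have hgfin : ∀ᵐ x ∂κ, (fun x : U => g (x : ℂ)) x < ⊤ := by
    filter_upwards with x using ENNReal.ofReal_lt_top
  -- change of variables for φ
  have key : ∀ B : Set ℂ, MeasurableSet B → B ⊆ U →
      ∫⁻ z in f '' B, φ z ∂μ₂ = ∫⁻ z in B, g z * φ (f z) ∂μ₂ := by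
    intro B hB hBU
    have hBU' : MeasurableSet (((↑) : U → ℂ) ⁻¹' B) := hv.measurable hB
    have himB : f '' B = e '' (((↑) : U → ℂ) ⁻¹' B) := by
      rw [he_def]
      ext y
      constructor
      · rintro ⟨z, hz, rfl⟩
        exact ⟨⟨z, hBU hz⟩, hz, rfl⟩
      · rintro ⟨⟨z, hzU⟩, hz, rfl⟩
        exact ⟨z, hz, rfl⟩
    have hfBm : MeasurableSet (f '' B) := by
      rw [himB]; exact he.measurableSet_image' hBU'
    have hfBr : f '' B ⊆ Set.range e := by
      rw [himB]; exact Set.image_subset_range _ _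
    have hepre : e ⁻¹' (f '' B) = ((↑) : U → ℂ) ⁻¹' B := by
      ext x
      simp only [Set.mem_preimage]
      constructor
      · rintro ⟨z, hz, hzx⟩
        have : z = (x : ℂ) := hinj (hBU hz) x.2 hzx
        rwa [← this]
      · intro hx
        exact ⟨(x : ℂ), hx, rfl⟩
    have h2 : (μ₂.restrict (Set.range e)).restrict (f '' B) = μ₂.restrict (f '' B) := by
      rw [Measure.restrict_restrict hfBm, Set.inter_eq_self_of_subset_left hfBr]
    calc ∫⁻ z in f '' B, φ z ∂μ₂
        = ∫⁻ z in f '' B, φ z ∂(μ₂.restrict (Set.range e)) := by rw [h2]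
      _ = ∫⁻ z in f '' B, φ z ∂(ν.map e) := by rw [hν_def, he.map_comap]
      _ = ∫⁻ x in e ⁻¹' (f '' B), φ (e x) ∂ν := by
          rw [he.restrict_map, he.lintegral_map]
      _ = ∫⁻ x in ((↑) : U → ℂ) ⁻¹' B, φ (f (x : ℂ)) ∂ν := by rw [hepre]; rfl
      _ = ∫⁻ x in ((↑) : U → ℂ) ⁻¹' B,
            ((fun x : U => g (x : ℂ)) * fun x : U => φ (f (x : ℂ))) x ∂κ := by
          have hgv : Measurable fun x : U => g (x : ℂ) := hg.comp hv.measurable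
          rw [hνd, setLIntegral_withDensity_eq_setLIntegral_mul_non_measurable κ
            hgv _ hBU' (hgfin.filter_mono (ae_mono Measure.restrict_le_self))]
      _ = ∫⁻ x in ((↑) : U → ℂ) ⁻¹' B, g (x : ℂ) * φ (f (x : ℂ)) ∂κ := rfl
      _ = ∫⁻ z in B, g z * φ (f z) ∂(κ.map ((↑) : U → ℂ)) := by
          rw [hv.restrict_map, hv.lintegral_map]
      _ = ∫⁻ z in B, g z * φ (f z) ∂(μ₂.restrict U) := by rw [hmapκ]
      _ = ∫⁻ z in B, g z * φ (f z) ∂μ₂ := by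
          rw [Measure.restrict_restrict hB, Set.inter_eq_self_of_subset_left hBU]
  -- the main identity
  have main : ∀ B : Set ℂ, MeasurableSet B → B ⊆ U →
      ∫⁻ z in B, g z * φ (f z) ∂μ₂ = ∫⁻ z in B, g z * φ z ∂μ₂ := by
    intro B hB hBU
    have hBU' : MeasurableSet (((↑) : U → ℂ) ⁻¹' B) := hv.measurable hB
    have hfBm : MeasurableSet (f '' B) := by
      have himB : f '' B = e '' (((↑) : U → ℂ) ⁻¹' B) := by
        rw [he_def]
        ext y
        constructor
        · rintro ⟨z, hz, rfl⟩
          exact ⟨⟨z, hBU hz⟩, hz, rfl⟩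
        · rintro ⟨⟨z, hzU⟩, hz, rfl⟩
          exact ⟨z, hz, rfl⟩
      rw [himB]; exact he.measurableSet_image' hBU'
    have h1 : μ₁ (f '' B) = ∫⁻ z in f '' B, φ z ∂μ₂ := by
      rw [hRN, withDensity_apply _ hfBm]
    have h2 : μ₁ (f '' B) = ∫⁻ z in B, g z * φ z ∂μ₂ := by
      rw [hconf₁ B hB hBU, hRN,
        setLIntegral_withDensity_eq_setLIntegral_mul μ₂ hφ hg hB]
      exact lintegral_congr fun z => mul_comm _ _
    rw [← key B hB hBU, ← h1, h2]
  -- conclude a.e. equality on μ₂.restrict U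
  have haemem : ∀ᵐ z ∂(μ₂.restrict U), z ∈ U := ae_restrict_mem hUm
  have hφf : AEMeasurable (fun z => φ (f z)) (μ₂.restrict U) :=
    hφ.comp_aemeasurable (hf.continuousOn.aemeasurable hUm)
  have hmul : (fun z => g z * φ (f z)) =ᵐ[μ₂.restrict U] fun z => g z * φ z := by
    apply ae_eq_of_forall_setLIntegral_eq_of_sigmaFinite₀
      (hg.aemeasurable.mul hφf) (hg.aemeasurable.mul hφ.aemeasurable)
    intro s hs _
    rw [Measure.restrict_restrict hs]
    exact main (s ∩ U) (hs.inter hUm) Set.inter_subset_right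
  filter_upwards [haemem, hmul] with z hzU hz
  have hg0 : g z ≠ 0 := by
    simp only [hg_def, ne_eq, ENNReal.ofReal_eq_zero, not_le]
    exact Real.rpow_pos_of_pos (norm_pos_iff.mpr (hDf z hzU)) δ
  have hgt : g z ≠ ⊤ := ENNReal.ofReal_ne_top
  exact (ENNReal.mul_right_inj hg0 hgt).mp hz
end
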